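/- Let (X, d) be a metric space with the following property (O₃-comparison for a Hilbert space H): for any six points x₀, x₁, y₀, y₁, z₀, z₁ ∈ X there exist points x̃₀, x̃₁, ỹ₀, ỹ₁, z̃₀, z̃₁ ∈ H such that ‖x̃₀ − x̃₁‖ ≥ d(x₀,x₁), ‖ỹ₀ − ỹ₁‖ ≥ d(y₀,y₁), ‖z̃₀ − z̃₁‖ ≥ d(z₀,z₁), and ‖q̃ᵢ − r̃ⱼ‖ ≤ d(qᵢ, rⱼ) for all i, j ∈ {0,1} and all distinct pairs q, r ∈ {x, y, z}. Then for all a, b, c, s, t ∈ [0,1] with a ≤ s and all x₀, x₁, y₀, y₁, z₀, z₁ ∈ X: s·t·a·((1−t)(1−a)+(1−s)t·b)·d(x₀,x₁)² + s(1−t)t(1−b)b·d(y₀,y₁)² + a·b(1−c)c·d(z₀,z₁)² ≤ (1−s)t·a·b(1−c)·d(x₀,z₀)² + s·t·a·b(1−c)·d(x₁,z₀)² + (1−t)a·b(1−c)·d(y₁,z₀)² + (1−s)t·a·b·c·d(x₀,z₁)² + s·t·a·b·c·d(x₁,z₁)² + (1−t)a·b·c·d(y₁,z₁)² + s(1−t)t(1−a)(1−b)·d(x₀,y₀)²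 + s(1−t)t·a(1−b)·d(x₁,y₀)² + (1−t)t(s−a)b·d(x₀,y₁)². -/
import Mathlib

open scoped RealInnerProductSpace

section Aux

variable {H : Type*} [NormedAddCommGroup H] [InnerProductSpace ℝ H]

private lemma expand3_aux (l m : ℝ) (u v w : H) :
    l * ‖u‖ ^ 2 + m * ‖v‖ ^ 2 + (1 - l - m) * ‖w‖ ^ 2 =
      ‖l • u + m • v + (1 - l - m) • w‖ ^ 2 + l * m * ‖u - v‖ ^ 2
        + l * (1 - l - m) * ‖u - w‖ ^ 2 + m * (1 - l - m) * ‖v - w‖ ^ 2 := by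
  simp only [← real_inner_self_eq_norm_sq]
  simp only [inner_add_left, inner_add_right, inner_sub_left, inner_sub_right,
    real_inner_smul_left, real_inner_smul_right]
  simp only [real_inner_comm v u, real_inner_comm w u, real_inner_comm w v]
  ring

private lemma bary3 (l m n : ℝ) (p q r z : H) (h : l + m + n = 1) :
    l * ‖p - z‖ ^ 2 + m * ‖q - z‖ ^ 2 + n * ‖r - z‖ ^ 2 =
      ‖l • p + m • q + n • r - z‖ ^ 2 + l * m * ‖p - q‖ ^ 2 + l * n * ‖p - r‖ ^ 2
        + m * n * ‖q - r‖ ^ 2 := by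
  have hn : n = 1 - l - m := by linarith
  subst hn
  have key := expand3_aux l m (p - z) (q - z) (r - z)
  have e1 : l • (p - z) + m • (q - z) + (1 - l - m) • (r - z)
      = l • p + m • q + (1 - l - m) • r - z := by module
  rw [e1] at key
  simpa [sub_sub_sub_cancel_right] using key

private lemma bary2 (l m : ℝ) (p q z : H) (h : l + m = 1) :
    l * ‖p - z‖ ^ 2 + m * ‖q - z‖ ^ 2 =
      ‖l • p + m • q - z‖ ^ 2 + l * m * ‖p - q‖ ^ 2 := by
  have := bary3 l m 0 p q q z (by linarith)
  simpa using this

set_option maxHeartbeats 1600000 in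
private lemma hilbert_six (a b c s t : ℝ) (hab : 0 ≤ a * b) (hst : 0 ≤ s * t * (1 - t))
    (x₀ x₁ y₀ y₁ z₀ z₁ : H) :
    s * t * a * ((1 - t) * (1 - a) + (1 - s) * t * b) * ‖x₀ - x₁‖ ^ 2 +
        s * (1 - t) * t * (1 - b) * b * ‖y₀ - y₁‖ ^ 2 +
        a * b * (1 - c) * c * ‖z₀ - z₁‖ ^ 2 ≤
      (1 - s) * t * a * b * (1 - c) * ‖x₀ - z₀‖ ^ 2 +
        s * t * a * b * (1 - c) * ‖x₁ - z₀‖ ^ 2 +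
        (1 - t) * a * b * (1 - c) * ‖y₁ - z₀‖ ^ 2 +
        (1 - s) * t * a * b * c * ‖x₀ - z₁‖ ^ 2 +
        s * t * a * b * c * ‖x₁ - z₁‖ ^ 2 +
        (1 - t) * a * b * c * ‖y₁ - z₁‖ ^ 2 +
        s * (1 - t) * t * (1 - a) * (1 - b) * ‖x₀ - y₀‖ ^ 2 +
        s * (1 - t) * t * a * (1 - b) * ‖x₁ - y₀‖ ^ 2 +
        (1 - t) * t * (s - a) * b * ‖x₀ - y₁‖ ^ 2 := by
  have E1 := bary3 ((1-s)*t) (s*t) (1-t) x₀ x₁ y₁ z₀ (by ring)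
  have E2 := bary3 ((1-s)*t) (s*t) (1-t) x₀ x₁ y₁ z₁ (by ring)
  have E3 := bary2 (1-c) c z₀ z₁ (((1-s)*t) • x₀ + (s*t) • x₁ + (1-t) • y₁) (by ring)
  rw [norm_sub_rev z₀ (((1-s)*t) • x₀ + (s*t) • x₁ + (1-t) • y₁),
    norm_sub_rev z₁ (((1-s)*t) • x₀ + (s*t) • x₁ + (1-t) • y₁)] at E3
  have E4 := bary2 (1-a) a x₀ x₁ y₀ (by ring)
  have E5 := bary2 (1-a) a x₀ x₁ y₁ (by ring)
  have E6 := bary2 (1-b) b y₀ y₁ ((1-a) • x₀ + a • x₁) (by ring)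
  rw [norm_sub_rev y₀ ((1-a) • x₀ + a • x₁), norm_sub_rev y₁ ((1-a) • x₀ + a • x₁)] at E6
  have n1 : 0 ≤ a * b *
      ‖(1-c) • z₀ + c • z₁ - (((1-s)*t) • x₀ + (s*t) • x₁ + (1-t) • y₁)‖ ^ 2 :=
    mul_nonneg hab (sq_nonneg _)
  have n2 : 0 ≤ s * t * (1 - t) * ‖(1-b) • y₀ + b • y₁ - ((1-a) • x₀ + a • x₁)‖ ^ 2 :=
    mul_nonneg hst (sq_nonneg _)
  have key :
      ((1 - s) * t * a * b * (1 - c) * ‖x₀ - z₀‖ ^ 2 +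
        s * t * a * b * (1 - c) * ‖x₁ - z₀‖ ^ 2 +
        (1 - t) * a * b * (1 - c) * ‖y₁ - z₀‖ ^ 2 +
        (1 - s) * t * a * b * c * ‖x₀ - z₁‖ ^ 2 +
        s * t * a * b * c * ‖x₁ - z₁‖ ^ 2 +
        (1 - t) * a * b * c * ‖y₁ - z₁‖ ^ 2 +
        s * (1 - t) * t * (1 - a) * (1 - b) * ‖x₀ - y₀‖ ^ 2 +
        s * (1 - t) * t * a * (1 - b) * ‖x₁ - y₀‖ ^ 2 +
        (1 - t) * t * (s - a) * b * ‖x₀ - y₁‖ ^ 2)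
      - (s * t * a * ((1 - t) * (1 - a) + (1 - s) * t * b) * ‖x₀ - x₁‖ ^ 2 +
        s * (1 - t) * t * (1 - b) * b * ‖y₀ - y₁‖ ^ 2 +
        a * b * (1 - c) * c * ‖z₀ - z₁‖ ^ 2)
      = a * b *
          ‖(1-c) • z₀ + c • z₁ - (((1-s)*t) • x₀ + (s*t) • x₁ + (1-t) • y₁)‖ ^ 2
        + s * t * (1 - t) * ‖(1-b) • y₀ + b • y₁ - ((1-a) • x₀ + a • x₁)‖ ^ 2 := by
    linear_combination (a*b*(1-c)) * E1 + (a*b*c) * E2 + (a*b) * E3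
      + (s*(1-t)*t*(1-b)) * E4 + (s*(1-t)*t*b) * E5 + (s*(1-t)*t) * E6
  linarith [n1, n2, key]

end Aux

theorem O3_comparison_implies_six_point_ineq
    {X : Type*} [MetricSpace X]
    {H : Type*} [NormedAddCommGroup H] [InnerProductSpace ℝ H] [CompleteSpace H]
    (hO3 : ∀ x₀ x₁ y₀ y₁ z₀ z₁ : X,
      ∃ x'₀ x'₁ y'₀ y'₁ z'₀ z'₁ : H,
        ‖x'₀ - x'₁‖ ≥ dist x₀ x₁ ∧ ‖y'₀ - y'₁‖ ≥ dist y₀ y₁ ∧ ‖z'₀ - z'₁‖ ≥ dist z₀ z₁ ∧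
        ‖x'₀ - y'₀‖ ≤ dist x₀ y₀ ∧ ‖x'₀ - y'₁‖ ≤ dist x₀ y₁ ∧
        ‖x'₁ - y'₀‖ ≤ dist x₁ y₀ ∧ ‖x'₁ - y'₁‖ ≤ dist x₁ y₁ ∧
        ‖x'₀ - z'₀‖ ≤ dist x₀ z₀ ∧ ‖x'₀ - z'₁‖ ≤ dist x₀ z₁ ∧
        ‖x'₁ - z'₀‖ ≤ dist x₁ z₀ ∧ ‖x'₁ - z'₁‖ ≤ dist x₁ z₁ ∧
        ‖y'₀ - z'₀‖ ≤ dist y₀ z₀ ∧ ‖y'₀ - z'₁‖ ≤ dist y₀ z₁ ∧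
        ‖y'₁ - z'₀‖ ≤ dist y₁ z₀ ∧ ‖y'₁ - z'₁‖ ≤ dist y₁ z₁)
    (a b c s t : ℝ)
    (ha0 : 0 ≤ a) (hb0 : 0 ≤ b) (hb1 : b ≤ 1) (hc0 : 0 ≤ c) (hc1 : c ≤ 1)
    (has : a ≤ s) (hs1 : s ≤ 1) (ht0 : 0 ≤ t) (ht1 : t ≤ 1)
    (x₀ x₁ y₀ y₁ z₀ z₁ : X) :
    s * t * a * ((1 - t) * (1 - a) + (1 - s) * t * b) * dist x₀ x₁ ^ 2 +
        s * (1 - t) * t * (1 - b) * b * dist y₀ y₁ ^ 2 +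
        a * b * (1 - c) * c * dist z₀ z₁ ^ 2 ≤
      (1 - s) * t * a * b * (1 - c) * dist x₀ z₀ ^ 2 +
        s * t * a * b * (1 - c) * dist x₁ z₀ ^ 2 +
        (1 - t) * a * b * (1 - c) * dist y₁ z₀ ^ 2 +
        (1 - s) * t * a * b * c * dist x₀ z₁ ^ 2 +
        s * t * a * b * c * dist x₁ z₁ ^ 2 +
        (1 - t) * a * b * c * dist y₁ z₁ ^ 2 +
        s * (1 - t) * t * (1 - a) * (1 - b) * dist x₀ y₀ ^ 2 +
        s * (1 - t) * t * a * (1 - b) * dist x₁ y₀ ^ 2 +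
        (1 - t) * t * (s - a) * b * dist x₀ y₁ ^ 2 := by
  obtain ⟨u₀, u₁, v₀, v₁, w₀, w₁, hx, hy, hz, hxy00, hxy01, hxy10, hxy11,
    hxz00, hxz01, hxz10, hxz11, hyz00, hyz01, hyz10, hyz11⟩ := hO3 x₀ x₁ y₀ y₁ z₀ z₁
  -- bound each squared quantity
  have sq_le : ∀ (d n : ℝ), 0 ≤ n → n ≤ d → n ^ 2 ≤ d ^ 2 := fun d n hn hnd =>
    pow_le_pow_left₀ hn hnd 2
  have bx : dist x₀ x₁ ^ 2 ≤ ‖u₀ - u₁‖ ^ 2 := sq_le _ _ dist_nonneg hx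
  have by' : dist y₀ y₁ ^ 2 ≤ ‖v₀ - v₁‖ ^ 2 := sq_le _ _ dist_nonneg hy
  have bz : dist z₀ z₁ ^ 2 ≤ ‖w₀ - w₁‖ ^ 2 := sq_le _ _ dist_nonneg hz
  have cxy00 : ‖u₀ - v₀‖ ^ 2 ≤ dist x₀ y₀ ^ 2 := sq_le _ _ (norm_nonneg _) hxy00
  have cxy01 : ‖u₀ - v₁‖ ^ 2 ≤ dist x₀ y₁ ^ 2 := sq_le _ _ (norm_nonneg _) hxy01
  have cxy10 : ‖u₁ - v₀‖ ^ 2 ≤ dist x₁ y₀ ^ 2 := sq_le _ _ (norm_nonneg _) hxy10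
  have cxz00 : ‖u₀ - w₀‖ ^ 2 ≤ dist x₀ z₀ ^ 2 := sq_le _ _ (norm_nonneg _) hxz00
  have cxz01 : ‖u₀ - w₁‖ ^ 2 ≤ dist x₀ z₁ ^ 2 := sq_le _ _ (norm_nonneg _) hxz01
  have cxz10 : ‖u₁ - w₀‖ ^ 2 ≤ dist x₁ z₀ ^ 2 := sq_le _ _ (norm_nonneg _) hxz10
  have cxz11 : ‖u₁ - w₁‖ ^ 2 ≤ dist x₁ z₁ ^ 2 := sq_le _ _ (norm_nonneg _) hxz11
  have cyz10 : ‖v₁ - w₀‖ ^ 2 ≤ dist y₁ z₀ ^ 2 := sq_le _ _ (norm_nonneg _) hyz10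
  have cyz11 : ‖v₁ - w₁‖ ^ 2 ≤ dist y₁ z₁ ^ 2 := sq_le _ _ (norm_nonneg _) hyz11
  -- nonnegativity of all coefficients
  have h1t : (0:ℝ) ≤ 1 - t := by linarith
  have h1s : (0:ℝ) ≤ 1 - s := by linarith
  have h1a : (0:ℝ) ≤ 1 - a := by linarith
  have h1b : (0:ℝ) ≤ 1 - b := by linarith
  have h1c : (0:ℝ) ≤ 1 - c := by linarith
  have hs0 : (0:ℝ) ≤ s := le_trans ha0 has
  have hsa : (0:ℝ) ≤ s - a := by linarith
  have key := hilbert_six a b c s t (mul_nonneg ha0 hb0)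
    (mul_nonneg (mul_nonneg hs0 ht0) h1t) u₀ u₁ v₀ v₁ w₀ w₁
  -- combine
  have cLx : 0 ≤ s * t * a * ((1 - t) * (1 - a) + (1 - s) * t * b) :=
    mul_nonneg (mul_nonneg (mul_nonneg hs0 ht0) ha0)
      (add_nonneg (mul_nonneg h1t h1a) (mul_nonneg (mul_nonneg h1s ht0) hb0))
  have cLy : 0 ≤ s * (1 - t) * t * (1 - b) * b :=
    mul_nonneg (mul_nonneg (mul_nonneg (mul_nonneg hs0 h1t) ht0) h1b) hb0
  have cLz : 0 ≤ a * b * (1 - c) * c :=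
    mul_nonneg (mul_nonneg (mul_nonneg ha0 hb0) h1c) hc0
  have cR1 : 0 ≤ (1 - s) * t * a * b * (1 - c) :=
    mul_nonneg (mul_nonneg (mul_nonneg (mul_nonneg h1s ht0) ha0) hb0) h1c
  have cR2 : 0 ≤ s * t * a * b * (1 - c) :=
    mul_nonneg (mul_nonneg (mul_nonneg (mul_nonneg hs0 ht0) ha0) hb0) h1c
  have cR3 : 0 ≤ (1 - t) * a * b * (1 - c) :=
    mul_nonneg (mul_nonneg (mul_nonneg h1t ha0) hb0) h1c
  have cR4 : 0 ≤ (1 - s) * t * a * b * c :=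
    mul_nonneg (mul_nonneg (mul_nonneg (mul_nonneg h1s ht0) ha0) hb0) hc0
  have cR5 : 0 ≤ s * t * a * b * c :=
    mul_nonneg (mul_nonneg (mul_nonneg (mul_nonneg hs0 ht0) ha0) hb0) hc0
  have cR6 : 0 ≤ (1 - t) * a * b * c :=
    mul_nonneg (mul_nonneg (mul_nonneg h1t ha0) hb0) hc0
  have cR7 : 0 ≤ s * (1 - t) * t * (1 - a) * (1 - b) :=
    mul_nonneg (mul_nonneg (mul_nonneg (mul_nonneg hs0 h1t) ht0) h1a) h1b
  have cR8 : 0 ≤ s * (1 - t) * t * a * (1 - b) :=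
    mul_nonneg (mul_nonneg (mul_nonneg (mul_nonneg hs0 h1t) ht0) ha0) h1b
  have cR9 : 0 ≤ (1 - t) * t * (s - a) * b :=
    mul_nonneg (mul_nonneg (mul_nonneg h1t ht0) hsa) hb0
  calc s * t * a * ((1 - t) * (1 - a) + (1 - s) * t * b) * dist x₀ x₁ ^ 2 +
        s * (1 - t) * t * (1 - b) * b * dist y₀ y₁ ^ 2 +
        a * b * (1 - c) * c * dist z₀ z₁ ^ 2
      ≤ s * t * a * ((1 - t) * (1 - a) + (1 - s) * t * b) * ‖u₀ - u₁‖ ^ 2 +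
        s * (1 - t) * t * (1 - b) * b * ‖v₀ - v₁‖ ^ 2 +
        a * b * (1 - c) * c * ‖w₀ - w₁‖ ^ 2 := by
        gcongr <;> assumption
    _ ≤ (1 - s) * t * a * b * (1 - c) * ‖u₀ - w₀‖ ^ 2 +
        s * t * a * b * (1 - c) * ‖u₁ - w₀‖ ^ 2 +
        (1 - t) * a * b * (1 - c) * ‖v₁ - w₀‖ ^ 2 +
        (1 - s) * t * a * b * c * ‖u₀ - w₁‖ ^ 2 +
        s * t * a * b * c * ‖u₁ - w₁‖ ^ 2 +
        (1 - t) * a * b * c * ‖v₁ - w₁‖ ^ 2 +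
        s * (1 - t) * t * (1 - a) * (1 - b) * ‖u₀ - v₀‖ ^ 2 +
        s * (1 - t) * t * a * (1 - b) * ‖u₁ - v₀‖ ^ 2 +
        (1 - t) * t * (s - a) * b * ‖u₀ - v₁‖ ^ 2 := key
    _ ≤ _ := by gcongr <;> assumption
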